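/- Let A, B, M be positive definite d×d real matrices with A ⪯ B (i.e. B - A positive semidefinite). Then the operator norm satisfies ‖A^{1/2} M A^{1/2}‖ ≤ ‖B^{1/2} M B^{1/2}‖. -/

import Mathlib

open scoped Matrix.Norms.L2Operator

open scoped ComplexOrder in
/-- The square root of a positive semidefinite matrix, as defined in the older Mathlib
(`Matrix.PosSemidef.sqrt`), which has since been removed. -/
noncomputable def Matrix.PosSemidef.sqrt {n : Type*} {𝕜 : Type*} [Fintype n] [DecidableEq n]
    [RCLike 𝕜] {A : Matrix n n 𝕜} (hA : A.PosSemidef) : Matrix n n 𝕜 :=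
  hA.1.eigenvectorUnitary.1 * Matrix.diagonal ((↑) ∘ (√·) ∘ hA.1.eigenvalues) *
    (star hA.1.eigenvectorUnitary : Matrix n n 𝕜)

lemma Matrix.PosSemidef.posSemidef_sqrt {d : ℕ} {P : Matrix (Fin d) (Fin d) ℝ}
    (hP : P.PosSemidef) : hP.sqrt.PosSemidef := by
  unfold Matrix.PosSemidef.sqrt
  have hD : (Matrix.diagonal ((↑) ∘ (√·) ∘ hP.1.eigenvalues : Fin d → ℝ)).PosSemidef := by
    rw [Matrix.posSemidef_diagonal_iff]
    intro i
    simp [Real.sqrt_nonneg]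
  have := hD.mul_mul_conjTranspose_same (hP.1.eigenvectorUnitary : Matrix (Fin d) (Fin d) ℝ)
  exact this

lemma Matrix.PosSemidef.sqrt_mul_self {d : ℕ} {P : Matrix (Fin d) (Fin d) ℝ}
    (hP : P.PosSemidef) : hP.sqrt * hP.sqrt = P := by
  unfold Matrix.PosSemidef.sqrt
  set U : Matrix (Fin d) (Fin d) ℝ := hP.1.eigenvectorUnitary.1
  have hU : star U * U = 1 := Unitary.coe_star_mul_self _
  have hs : ∀ i, √(hP.1.eigenvalues i) * √(hP.1.eigenvalues i) = hP.1.eigenvalues i :=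
    fun i => Real.mul_self_sqrt (hP.eigenvalues_nonneg i)
  conv_rhs => rw [hP.1.spectral_theorem, Unitary.conjStarAlgAut_apply]
  calc U * Matrix.diagonal ((↑) ∘ (√·) ∘ hP.1.eigenvalues) * star U *
        (U * Matrix.diagonal ((↑) ∘ (√·) ∘ hP.1.eigenvalues) * star U)
      = U * (Matrix.diagonal ((↑) ∘ (√·) ∘ hP.1.eigenvalues) * (star U * U) *
          Matrix.diagonal ((↑) ∘ (√·) ∘ hP.1.eigenvalues)) * star U := by
        simp only [mul_assoc]
    _ = _ := by
        rw [hU, mul_one, Matrix.diagonal_mul_diagonal]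
        congr 3
        funext i
        simp [hs i]


open Matrix in
lemma psd_dot_sqrt {d : ℕ} {P : Matrix (Fin d) (Fin d) ℝ}
    (hP : P.PosSemidef) (x : Fin d → ℝ) :
    (hP.sqrt *ᵥ x) ⬝ᵥ (hP.sqrt *ᵥ x) = x ⬝ᵥ (P *ᵥ x) := by
  have hs : hP.sqrtᵀ = hP.sqrt := by
    rw [← Matrix.conjTranspose_eq_transpose_of_trivial, hP.posSemidef_sqrt.isHermitian.eq]
  symm
  calc x ⬝ᵥ (P *ᵥ x) = x ⬝ᵥ (hP.sqrt *ᵥ (hP.sqrt *ᵥ x)) := by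
        rw [Matrix.mulVec_mulVec, hP.sqrt_mul_self]
    _ = (x ᵥ* hP.sqrt) ⬝ᵥ (hP.sqrt *ᵥ x) := by rw [Matrix.dotProduct_mulVec]
    _ = (hP.sqrt *ᵥ x) ⬝ᵥ (hP.sqrt *ᵥ x) := by rw [← hs, Matrix.vecMul_transpose, hs]

open Matrix in
lemma psd_norm_mono {d : ℕ} {P Q : Matrix (Fin d) (Fin d) ℝ}
    (hP : P.PosSemidef) (hQP : (Q - P).PosSemidef) : ‖P‖ ≤ ‖Q‖ := by
  have hQ : Q.PosSemidef := by simpa using hQP.add hP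
  have key : ∀ (R : Matrix (Fin d) (Fin d) ℝ) (hR : R.PosSemidef),
      ‖R‖ = ‖hR.sqrt‖ * ‖hR.sqrt‖ := by
    intro R hR
    have h : hR.sqrtᴴ * hR.sqrt = R := by
      rw [hR.posSemidef_sqrt.isHermitian.eq, hR.sqrt_mul_self]
    have h2 := l2_opNorm_conjTranspose_mul_self hR.sqrt
    rw [h] at h2
    exact h2
  rw [key P hP, key Q hQ]
  have e : ∀ (R : Matrix (Fin d) (Fin d) ℝ) (x : EuclideanSpace ℝ (Fin d)),
      ‖(WithLp.equiv 2 (Fin d → ℝ)).symm (R *ᵥ (WithLp.equiv 2 (Fin d → ℝ)) x)‖ ^ 2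
        = ((R *ᵥ (WithLp.equiv 2 (Fin d → ℝ)) x) ⬝ᵥ (R *ᵥ (WithLp.equiv 2 (Fin d → ℝ)) x)) := by
    intro R x
    rw [EuclideanSpace.norm_eq, Real.sq_sqrt (by positivity)]
    simp [dotProduct, sq]
  have hle : ‖hP.sqrt‖ ≤ ‖hQ.sqrt‖ := by
    rw [l2_opNorm_def]
    refine ContinuousLinearMap.opNorm_le_bound _ (norm_nonneg _) fun x => ?_
    have h1 : ‖(WithLp.equiv 2 (Fin d → ℝ)).symm (hP.sqrt *ᵥ (WithLp.equiv 2 (Fin d → ℝ)) x)‖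
        ≤ ‖(WithLp.equiv 2 (Fin d → ℝ)).symm (hQ.sqrt *ᵥ (WithLp.equiv 2 (Fin d → ℝ)) x)‖ := by
      have h2 := e hP.sqrt x
      have h3 := e hQ.sqrt x
      rw [psd_dot_sqrt hP] at h2
      rw [psd_dot_sqrt hQ] at h3
      have h4 := hQP.dotProduct_mulVec_nonneg ((WithLp.equiv 2 (Fin d → ℝ)) x)
      simp only [Matrix.sub_mulVec, dotProduct_sub, star_trivial] at h4
      have h5 : ‖(WithLp.equiv 2 (Fin d → ℝ)).symm (hP.sqrt *ᵥ (WithLp.equiv 2 (Fin d → ℝ)) x)‖ ^ 2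
          ≤ ‖(WithLp.equiv 2 (Fin d → ℝ)).symm (hQ.sqrt *ᵥ (WithLp.equiv 2 (Fin d → ℝ)) x)‖ ^ 2 := by
        rw [h2, h3]; linarith
      exact (pow_le_pow_iff_left₀ (norm_nonneg _) (norm_nonneg _) two_ne_zero).mp h5
    exact h1.trans (hQ.sqrt.l2_opNorm_mulVec x)
  exact mul_le_mul hle hle (norm_nonneg _) (norm_nonneg _)

open Matrix in
lemma norm_sqrt_conj_swap {d : ℕ} (X M : Matrix (Fin d) (Fin d) ℝ)
    (hX : X.PosSemidef) (hM : M.PosSemidef) :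
    ‖hX.sqrt * M * hX.sqrt‖ = ‖hM.sqrt * X * hM.sqrt‖ := by
  set C := hM.sqrt * hX.sqrt with hC
  have h1 : Cᴴ * C = hX.sqrt * M * hX.sqrt := by
    rw [hC, Matrix.conjTranspose_mul, hX.posSemidef_sqrt.isHermitian.eq,
      hM.posSemidef_sqrt.isHermitian.eq]
    rw [show hX.sqrt * hM.sqrt * (hM.sqrt * hX.sqrt)
        = hX.sqrt * (hM.sqrt * hM.sqrt) * hX.sqrt by simp only [mul_assoc], hM.sqrt_mul_self]
  have h2 : C * Cᴴ = hM.sqrt * X * hM.sqrt := by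
    rw [hC, Matrix.conjTranspose_mul, hX.posSemidef_sqrt.isHermitian.eq,
      hM.posSemidef_sqrt.isHermitian.eq]
    rw [show hM.sqrt * hX.sqrt * (hX.sqrt * hM.sqrt)
        = hM.sqrt * (hX.sqrt * hX.sqrt) * hM.sqrt by simp only [mul_assoc], hX.sqrt_mul_self]
  have e1 := l2_opNorm_conjTranspose_mul_self C
  have e2 := l2_opNorm_conjTranspose_mul_self Cᴴ
  rw [Matrix.conjTranspose_conjTranspose, l2_opNorm_conjTranspose] at e2
  rw [h1] at e1
  rw [h2] at e2
  rw [e1, e2]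

/-- If `A ⪯ B` (i.e. `B - A` PSD) for positive definite `A, B` and `M` is
positive definite, then `‖A^{1/2} M A^{1/2}‖ ≤ ‖B^{1/2} M B^{1/2}‖` in the
L2 operator norm. -/
theorem statement5 {d : ℕ} (A B M : Matrix (Fin d) (Fin d) ℝ)
    (hA : A.PosDef) (hB : B.PosDef) (hM : M.PosDef)
    (hAB : (B - A).PosSemidef) :
    ‖hA.posSemidef.sqrt * M * hA.posSemidef.sqrt‖ ≤
      ‖hB.posSemidef.sqrt * M * hB.posSemidef.sqrt‖ := by
  rw [norm_sqrt_conj_swap A M hA.posSemidef hM.posSemidef,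
    norm_sqrt_conj_swap B M hB.posSemidef hM.posSemidef]
  set S := hM.posSemidef.sqrt with hS
  have hSH : S.conjTranspose = S := hM.posSemidef.posSemidef_sqrt.isHermitian.eq
  have hP : (S * A * S).PosSemidef := by
    have := hA.posSemidef.mul_mul_conjTranspose_same S
    rwa [hSH] at this
  have hD : (S * B * S - S * A * S).PosSemidef := by
    have := hAB.mul_mul_conjTranspose_same S
    rwa [hSH, Matrix.mul_sub, Matrix.sub_mul] at this
  exact psd_norm_mono hP hD
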